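/- Let $\{v_1, \ldots, v_m\}$ be a reduced basis of a lattice in $\mathbb{R}^m$, with Gram–Schmidt orthonormal basis $\{\phi_1,\ldots,\phi_m\}$ and Gram–Schmidt lengths $a_j = \mathrm{dist}(v_j, \mathrm{span}\{v_1,\ldots,v_{j-1}\})$. Then $\frac{\sqrt{3}}{2} a_j \le a_{j+1}$ for all $j = 1, \ldots, m-1$. -/

import Mathlib

open RealInnerProductSpace

/-- The span of the first `j` vectors (indices `< j`). -/
noncomputable def gsSpan (m : ℕ) (v : Fin m → EuclideanSpace ℝ (Fin m)) (j : Fin m) :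
    Submodule ℝ (EuclideanSpace ℝ (Fin m)) :=
  Submodule.span ℝ (v '' {i | i < j})

/-- `a_j`, the distance of `v j` from the span of the previous vectors. -/
noncomputable def gsDist (m : ℕ) (v : Fin m → EuclideanSpace ℝ (Fin m)) (j : Fin m) : ℝ :=
  Metric.infDist (v j) (gsSpan m v j : Set (EuclideanSpace ℝ (Fin m)))

/-- The (unnormalized) Gram–Schmidt vector `a_j φ_j = v_j - proj_{V_{j-1}} v_j`. -/
noncomputable def gsVec (m : ℕ) (v : Fin m → EuclideanSpace ℝ (Fin m)) (j : Fin m) :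
    EuclideanSpace ℝ (Fin m) :=
  v j - (Submodule.orthogonalProjectionOnto (gsSpan m v j) (v j) : EuclideanSpace ℝ (Fin m))

/-- The basis `v` is reduced: (1) each `v_j` has minimal distance to `V_{j-1}` among
lattice vectors outside `V_{j-1}`; (2) the Gram–Schmidt coefficients satisfy
`|n_{ij}| ≤ 1/2`, i.e. `|⟨v_j, a_i φ_i⟩| ≤ a_i²/2`. -/
def IsReducedBasis (m : ℕ) (v : Fin m → EuclideanSpace ℝ (Fin m)) : Prop :=
  (∀ (j : Fin m) (c : Fin m → ℤ),
      (∑ i, c i • v i) ∉ gsSpan m v j →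
      gsDist m v j ≤
        Metric.infDist (∑ i, c i • v i) (gsSpan m v j : Set (EuclideanSpace ℝ (Fin m)))) ∧
  (∀ i j : Fin m, i < j → |⟪v j, gsVec m v i⟫| ≤ ‖gsVec m v i‖ ^ 2 / 2)

lemma infDist_eq_norm_sub_proj {m : ℕ} (U : Submodule ℝ (EuclideanSpace ℝ (Fin m)))
    (x : EuclideanSpace ℝ (Fin m)) :
    Metric.infDist x (U : Set (EuclideanSpace ℝ (Fin m))) =
      ‖x - Submodule.orthogonalProjectionOnto U x‖ := by
  rw [Metric.infDist_eq_iInf, show (x - (Submodule.orthogonalProjectionOnto U x : EuclideanSpace ℝ (Fin m))) = x - U.starProjection x from rfl, Submodule.starProjection_minimal]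
  simp only [dist_eq_norm]
  rfl

set_option maxHeartbeats 2000000 in
/-- For a reduced basis, `(√3/2) a_j ≤ a_{j+1}`. -/
theorem stmt5 (m : ℕ) (v : Fin m → EuclideanSpace ℝ (Fin m))
    (hv : LinearIndependent ℝ v) (hred : IsReducedBasis m v)
    (j : Fin m) (hj : (j : ℕ) + 1 < m) :
    Real.sqrt 3 / 2 * gsDist m v j ≤ gsDist m v ⟨(j : ℕ) + 1, hj⟩ := by
  set j' : Fin m := ⟨(j : ℕ) + 1, hj⟩ with hj'def
  have hjj' : j < j' := by simp [Fin.lt_def, hj'def]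
  set K := gsSpan m v j with hK
  set K' := gsSpan m v j' with hK'
  set u := gsVec m v j with hu
  set w := gsVec m v j' with hw
  -- basic facts
  have hKK' : K ≤ K' := Submodule.span_mono (Set.image_mono (fun i hi => lt_trans hi hjj'))
  have hvjK' : v j ∈ K' := Submodule.subset_span ⟨j, hjj', rfl⟩
  have huK' : u ∈ K' := Submodule.sub_mem _ hvjK' (hKK' (Submodule.orthogonalProjectionOnto K (v j)).2)
  have huKo : u ∈ Kᗮ := Submodule.sub_starProjection_mem_orthogonal (K := K) (v j)
  have hwK'o : w ∈ K'ᗮ := Submodule.sub_starProjection_mem_orthogonal (K := K') (v j')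
  have hvjK : v j ∉ K := hv.notMem_span_image (by simp)
  have hvj'K : v j' ∉ K := hv.notMem_span_image (by
    simp only [Set.mem_setOf_eq, not_lt]
    exact le_of_lt hjj')
  have hune : u ≠ 0 := by
    intro h
    apply hvjK
    have : v j = (Submodule.orthogonalProjectionOnto K (v j) : EuclideanSpace ℝ (Fin m)) := by
      have := sub_eq_zero.mp h
      exact this
    rw [this]; exact (Submodule.orthogonalProjectionOnto K (v j)).2
  have hupos : 0 < ‖u‖ := norm_pos_iff.mpr hune
  -- gsDist in terms of gsVec
  have hdj : gsDist m v j = ‖u‖ := infDist_eq_norm_sub_proj K (v j)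
  have hdj' : gsDist m v j' = ‖w‖ := infDist_eq_norm_sub_proj K' (v j')
  -- Step A: a_j ≤ infDist (v j') K
  have hA : gsDist m v j ≤ Metric.infDist (v j') (K : Set (EuclideanSpace ℝ (Fin m))) := by
    have hsum : (∑ i, (if i = j' then (1 : ℤ) else 0) • v i) = v j' := by
      rw [Finset.sum_eq_single j']
      · simp
      · intro i _ hi; simp [hi]
      · simp
    have := hred.1 j (fun i => if i = j' then (1 : ℤ) else 0)
    rw [hsum] at this
    exact this hvj'K
  -- coefficient
  set n : ℝ := ⟪v j', u⟫ / ‖u‖ ^ 2 with hn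
  have hnu : n * ‖u‖ ^ 2 = ⟪v j', u⟫ := by
    rw [hn, div_mul_cancel₀ _ (pow_pos hupos 2).ne']
  -- K' = K ⊔ span {u}
  have hK'eq : K' = K ⊔ Submodule.span ℝ {u} := by
    have hset : {i : Fin m | i < j'} = insert j {i : Fin m | i < j} := by
      ext i
      simp only [Set.mem_setOf_eq, Set.mem_insert_iff, Fin.lt_def, hj'def]
      omega
    have h1 : K' = Submodule.span ℝ {v j} ⊔ K := by
      rw [hK', gsSpan, hset, Set.image_insert_eq, Submodule.span_insert]
      rfl
    rw [h1]
    apply le_antisymm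
    · apply sup_le
      · rw [Submodule.span_singleton_le_iff_mem]
        have : v j = u + (Submodule.orthogonalProjectionOnto K (v j) : EuclideanSpace ℝ (Fin m)) := by
          rw [hu, gsVec]; abel
        rw [this]
        exact Submodule.add_mem _
          (Submodule.mem_sup_right (Submodule.mem_span_singleton_self u))
          (Submodule.mem_sup_left (Submodule.orthogonalProjectionOnto K (v j)).2)
      · exact le_sup_left
    · apply sup_le
      · exact le_sup_right
      · rw [Submodule.span_singleton_le_iff_mem]
        rw [hu, gsVec]
        exact Submodule.sub_mem _ (Submodule.mem_sup_left (Submodule.mem_span_singleton_self _))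
          (Submodule.mem_sup_right (Submodule.orthogonalProjectionOnto K (v j)).2)
  -- p₀ ∈ K
  set p₀ : EuclideanSpace ℝ (Fin m) :=
    (Submodule.orthogonalProjectionOnto K' (v j') : EuclideanSpace ℝ (Fin m)) - n • u with hp₀
  have hp₀K' : p₀ ∈ K' := Submodule.sub_mem _ (Submodule.orthogonalProjectionOnto K' (v j')).2
    (Submodule.smul_mem _ _ huK')
  have hp₀u : ⟪p₀, u⟫ = 0 := by
    have h1 : ⟪v j' - (Submodule.orthogonalProjectionOnto K' (v j') : EuclideanSpace ℝ (Fin m)), u⟫ = 0 := by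
      exact (Submodule.mem_orthogonal' K' _).mp hwK'o u huK'
    have h2 : ⟪(Submodule.orthogonalProjectionOnto K' (v j') : EuclideanSpace ℝ (Fin m)), u⟫ = ⟪v j', u⟫ := by
      have := inner_sub_left (𝕜 := ℝ) (v j') ((Submodule.orthogonalProjectionOnto K' (v j') : EuclideanSpace ℝ (Fin m))) u
      rw [h1] at this
      linarith
    rw [hp₀, inner_sub_left, h2, real_inner_smul_left, real_inner_self_eq_norm_sq]
    rw [← hnu]; ring
  have hp₀K : p₀ ∈ K := by
    rw [hK'eq] at hp₀K'
    obtain ⟨y, hy, z, hz, hyz⟩ := Submodule.mem_sup.mp hp₀K'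
    obtain ⟨t, rfl⟩ := Submodule.mem_span_singleton.mp hz
    have hyu : ⟪y, u⟫ = 0 := (Submodule.mem_orthogonal K u).mp huKo y hy
    have : ⟪p₀, u⟫ = t * ‖u‖ ^ 2 := by
      rw [← hyz, inner_add_left, hyu, real_inner_smul_left, real_inner_self_eq_norm_sq]
      ring
    rw [hp₀u] at this
    have ht : t = 0 := by
      have h2 : (0:ℝ) < ‖u‖ ^ 2 := by positivity
      nlinarith
    rw [← hyz, ht, zero_smul, add_zero]
    exact hy
  -- Step C: infDist (v j') K ≤ ‖w + n • u‖ and norm computation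
  have hwu : ⟪w, n • u⟫ = 0 := by
    rw [real_inner_smul_right, (Submodule.mem_orthogonal' K' w).mp hwK'o u huK', mul_zero]
  have hdecomp : v j' - p₀ = w + n • u := by
    rw [hp₀, hw, gsVec]; abel
  have hC : Metric.infDist (v j') (K : Set (EuclideanSpace ℝ (Fin m))) ≤ ‖w + n • u‖ := by
    rw [← hdecomp, ← dist_eq_norm]
    exact Metric.infDist_le_dist_of_mem hp₀K
  have hnormsq : ‖w + n • u‖ ^ 2 = ‖w‖ ^ 2 + n ^ 2 * ‖u‖ ^ 2 := by
    rw [norm_add_sq_real, hwu, norm_smul, mul_pow, Real.norm_eq_abs, sq_abs]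
    ring
  -- Step D: combine
  have hcoef : |⟪v j', u⟫| ≤ ‖u‖ ^ 2 / 2 := hred.2 j j' hjj'
  have hn2 : n ^ 2 * ‖u‖ ^ 2 ≤ ‖u‖ ^ 2 / 4 := by
    have h2 : (0:ℝ) < ‖u‖ ^ 2 := by positivity
    have h3 : ⟪v j', u⟫ ^ 2 ≤ (‖u‖ ^ 2 / 2) ^ 2 := by
      have := abs_nonneg ⟪v j', u⟫
      nlinarith [sq_abs ⟪v j', u⟫]
    have key : ∀ c r : ℝ, r ≠ 0 → (c / r) ^ 2 * r = c ^ 2 / r := by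
      intro c r hr; field_simp
    have h4 : n ^ 2 * ‖u‖ ^ 2 = ⟪v j', u⟫ ^ 2 / ‖u‖ ^ 2 := by
      rw [hn]; exact key _ _ h2.ne'
    rw [h4, div_le_div_iff₀ h2 (by norm_num : (0:ℝ) < 4)]
    nlinarith [h3]
  have hmain : ‖u‖ ^ 2 ≤ ‖w‖ ^ 2 + ‖u‖ ^ 2 / 4 := by
    have h1 : ‖u‖ ≤ ‖w + n • u‖ := by
      rw [hdj] at hA
      linarith
    nlinarith [norm_nonneg (w + n • u), norm_nonneg u]
  have hfin : 3 / 4 * ‖u‖ ^ 2 ≤ ‖w‖ ^ 2 := by linarith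
  rw [hdj, hdj']
  have hs3 : Real.sqrt 3 ^ 2 = 3 := Real.sq_sqrt (by norm_num)
  nlinarith [Real.sqrt_nonneg 3, norm_nonneg u, norm_nonneg w,
    sq_nonneg (Real.sqrt 3 / 2 * ‖u‖ - ‖w‖), sq_nonneg (Real.sqrt 3 / 2 * ‖u‖ + ‖w‖)]
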